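/- arXiv:1411.2889 — 2 statements merged into one kernel-verified Lean document; each statement's English description precedes it below -/
import Mathlib

section
/- Let Γ be a finitely generated group, p, q ≥ 3, and let ρ0 ∈ Hom(Γ, SO(p,q)) have Zariski-dense image in the block-diagonal subgroup SO(p)×SO(q). Let (ρ_n) be a sequence in Hom(Γ, SO(p,q)) converging pointwise to ρ0, and suppose that for each n the Zariski closure of ρ_n(Γ) is conjugate in SO(p,q) either to SO(p)×SO(q) or to S(O(p)×O(q)). Then there exists an integer N such that for all n ≥ N the Zariski closure of ρ_n(Γ) is conjugate to SO(p)×SO(q). -/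
noncomputable section

open MvPolynomial Matrix

namespace Paper

variable {ι : Type} [Fintype ι] [DecidableEq ι] {K : Type} [Field K]

/-- The entries of a matrix, as a point of affine space. -/
def mPt (A : Matrix ι ι K) : ι × ι → K := fun p => A p.1 p.2

/-- The Zariski closure of a set of matrices: the common zero locus of all polynomial
functions of the entries vanishing on the set. -/
def zClosure (s : Set (Matrix ι ι K)) : Set (Matrix ι ι K) :=
  {A | ∀ f : MvPolynomial (ι × ι) K,
    (∀ B ∈ s, MvPolynomial.eval (mPt B) f = 0) → MvPolynomial.eval (mPt A) f = 0}

/-- The Zariski topology on matrices, generated by complements of zero sets of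
polynomial functions of the entries. -/
def zTop (ι K : Type) [Fintype ι] [Field K] : TopologicalSpace (Matrix ι ι K) :=
  TopologicalSpace.generateFrom
    {U | ∃ f : MvPolynomial (ι × ι) K, U = {A | MvPolynomial.eval (mPt A) f ≠ 0}}

/-- A set of matrices is Zariski closed if it equals its Zariski closure. -/
def IsZClosed (s : Set (Matrix ι ι K)) : Prop := zClosure s = s

/-- Zariski connectedness (as a subspace of the Zariski topology). -/
def IsZConnected (s : Set (Matrix ι ι K)) : Prop :=
  letI := zTop ι K
  IsPreconnected s

/-- Krull dimension of a set of matrices in the Zariski topology, as a natural number. -/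
def zDim (s : Set (Matrix ι ι K)) : ℕ :=
  letI := zTop ι K
  (WithBot.unbotD 0 (topologicalKrullDim s)).toNat

/-- A set of matrices forming a subgroup of the group of invertible matrices. -/
def IsMatSubgroup (s : Set (Matrix ι ι K)) : Prop :=
  (1 : Matrix ι ι K) ∈ s ∧ (∀ A ∈ s, ∀ B ∈ s, A * B ∈ s) ∧
    ∀ A ∈ s, IsUnit A ∧ A⁻¹ ∈ s

/-- The set of commutators of elements of `s`. -/
def commSet (s : Set (Matrix ι ι K)) : Set (Matrix ι ι K) :=
  {X | ∃ A ∈ s, ∃ B ∈ s, X = A * B * A⁻¹ * B⁻¹}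

/-- The subgroup (set) generated by a set of matrices. -/
def genSubgroup (t : Set (Matrix ι ι K)) : Set (Matrix ι ι K) :=
  ⋂₀ {u | IsMatSubgroup u ∧ t ⊆ u}

/-- Derived series of a set of matrices. -/
def derivedSeriesSet (s : Set (Matrix ι ι K)) : ℕ → Set (Matrix ι ι K)
  | 0 => s
  | n + 1 => genSubgroup (commSet (derivedSeriesSet s n))

/-- Solvability for a matrix group. -/
def IsSolvableSet (s : Set (Matrix ι ι K)) : Prop :=
  ∃ n, derivedSeriesSet s n ⊆ {1}

/-- `t` is normal in `s`. -/
def IsNormalIn (t s : Set (Matrix ι ι K)) : Prop :=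
  ∀ A ∈ s, ∀ B ∈ t, A * B * A⁻¹ ∈ t

/-- A semisimple linear algebraic group: a Zariski-closed, Zariski-connected matrix
subgroup with trivial radical, i.e. every Zariski-closed connected normal solvable
subgroup is trivial. -/
def IsSemisimpleGrp (s : Set (Matrix ι ι K)) : Prop :=
  IsMatSubgroup s ∧ IsZClosed s ∧ IsZConnected s ∧
    ∀ t ⊆ s, IsMatSubgroup t → IsZClosed t → IsZConnected t →
      IsNormalIn t s → IsSolvableSet t → t ⊆ {1}

/-- The identity component of a matrix group: the union of all Zariski-connected
subsets of `s` containing the identity. -/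
def idComponent (s : Set (Matrix ι ι K)) : Set (Matrix ι ι K) :=
  {A | ∃ t ⊆ s, IsZConnected t ∧ (1 : Matrix ι ι K) ∈ t ∧ A ∈ t}

/-- A unipotent matrix. -/
def IsUnipotent (A : Matrix ι ι K) : Prop := (A - 1) ^ Fintype.card ι = 0

/-- A reductive linear algebraic group: a Zariski-closed matrix subgroup whose
identity component has trivial unipotent radical, i.e. every Zariski-closed connected
normal subgroup of the identity component consisting of unipotent elements is trivial. -/
def IsReductiveGrp (s : Set (Matrix ι ι K)) : Prop :=
  IsMatSubgroup s ∧ IsZClosed s ∧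
    ∀ t ⊆ idComponent s, IsMatSubgroup t → IsZClosed t → IsZConnected t →
      IsNormalIn t (idComponent s) → (∀ A ∈ t, IsUnipotent A) → t ⊆ {1}

/-- A matrix is diagonalizable. -/
def IsDiagonalizable (A : Matrix ι ι K) : Prop :=
  ∃ P D : Matrix ι ι K, IsUnit P ∧ D.IsDiag ∧ A = P * D * P⁻¹

/-- A torus in a real matrix group: a Zariski-closed, Zariski-connected commutative
matrix subgroup all of whose elements are diagonalizable over `ℂ`. -/
def IsTorus (s : Set (Matrix ι ι ℝ)) : Prop :=
  IsMatSubgroup s ∧ IsZClosed s ∧ IsZConnected s ∧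
    (∀ A ∈ s, ∀ B ∈ s, A * B = B * A) ∧
    ∀ A ∈ s, IsDiagonalizable (A.map (algebraMap ℝ ℂ))

/-- The rank of a real linear algebraic group: the dimension of a maximal torus. -/
def rankGrp (s : Set (Matrix ι ι ℝ)) : ℕ :=
  sSup {d | ∃ t ⊆ s, IsTorus t ∧ zDim t = d}

/-- The matrix `J = diag(I_p, −I_q)`. -/
def Jmat (p q : ℕ) : Matrix (Fin p ⊕ Fin q) (Fin p ⊕ Fin q) ℝ :=
  Matrix.fromBlocks 1 0 0 (-1)

/-- The indefinite special orthogonal group `SO(p,q)`, as a set of matrices. -/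
def SOpq (p q : ℕ) : Set (Matrix (Fin p ⊕ Fin q) (Fin p ⊕ Fin q) ℝ) :=
  {S | S.det = 1 ∧ Sᵀ * Jmat p q * S = Jmat p q}

/-- The special orthogonal group `SO(n)`, as a set of matrices. -/
def SOn (n : ℕ) : Set (Matrix (Fin n) (Fin n) ℝ) :=
  {M | M.det = 1 ∧ Mᵀ * M = 1}

/-- `SO(p) × SO(q)`, block-diagonally embedded into `SO(p,q)`. -/
def blockSO (p q : ℕ) : Set (Matrix (Fin p ⊕ Fin q) (Fin p ⊕ Fin q) ℝ) :=
  {S | ∃ M ∈ SOn p, ∃ N ∈ SOn q, S = Matrix.fromBlocks M 0 0 N}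

/-- The quadratic form `Q(v) = vᵀ J v` on `ℝ^{p+q}`. -/
def Qform (p q : ℕ) (v : Fin p ⊕ Fin q → ℝ) : ℝ :=
  dotProduct v ((Jmat p q).mulVec v)

/-- The orthogonal complement of a subspace with respect to the bilinear form
`B(v,w) = vᵀ J w`. -/
def perpJ (p q : ℕ) (W : Submodule ℝ (Fin p ⊕ Fin q → ℝ)) :
    Submodule ℝ (Fin p ⊕ Fin q → ℝ) where
  carrier := {v | ∀ w ∈ W, dotProduct v ((Jmat p q).mulVec w) = 0}
  zero_mem' := by
    intro w hw
    simp [zero_dotProduct]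
  add_mem' := by
    intro a b ha hb w hw
    rw [add_dotProduct, ha w hw, hb w hw, add_zero]
  smul_mem' := by
    intro c a ha w hw
    rw [smul_dotProduct, ha w hw, smul_zero]

/-- The complexification of a real subspace of `ℝ^ι`, as a complex subspace of `ℂ^ι`. -/
def cxSpan {ι : Type} (W : Submodule ℝ (ι → ℝ)) : Submodule ℂ (ι → ℂ) :=
  Submodule.span ℂ ((fun (v : ι → ℝ) (i : ι) => ((v i : ℝ) : ℂ)) '' (W : Set (ι → ℝ)))

/-- The orthogonal group `O(n)`, as a set of matrices. -/
def On (n : ℕ) : Set (Matrix (Fin n) (Fin n) ℝ) := {M | Mᵀ * M = 1}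

/-- `S(O(p) × O(q))`, block-diagonally embedded into `SO(p,q)`. -/
def blockSOO (p q : ℕ) : Set (Matrix (Fin p ⊕ Fin q) (Fin p ⊕ Fin q) ℝ) :=
  {S | ∃ A ∈ On p, ∃ B ∈ On q, A.det * B.det = 1 ∧ S = Matrix.fromBlocks A 0 0 B}


/-! ### Auxiliary lemmas for Statement 14 -/

section Stmt14Aux

set_option maxHeartbeats 1600000 in
section

variable {m' n' : Type} [Fintype m'] [DecidableEq m'] [Fintype n'] [DecidableEq n']

private lemma quad14 (M : Matrix m' n' ℝ) (v : n' → ℝ) :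
    v ⬝ᵥ ((Mᵀ * M) *ᵥ v) = (M *ᵥ v) ⬝ᵥ (M *ᵥ v) := by
  rw [← Matrix.mulVec_mulVec, Matrix.dotProduct_mulVec v Mᵀ, Matrix.vecMul_transpose]

private lemma sq_nonneg14 (v : n' → ℝ) : 0 ≤ v ⬝ᵥ v :=
  Finset.sum_nonneg fun _ _ => mul_self_nonneg _

private lemma det_ne_of14 {A : Matrix m' m' ℝ} {E : Matrix m' n' ℝ}
    (h : A * Aᵀ = 1 + E * Eᵀ) : A.det ≠ 0 := by
  intro h0
  have h0t : Aᵀ.det = 0 := by rwa [Matrix.det_transpose]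
  obtain ⟨v, hv, hv0⟩ := (Matrix.exists_mulVec_eq_zero_iff).2 h0t
  have e1 : v ⬝ᵥ ((A * Aᵀ) *ᵥ v) = 0 := by
    have hA : A * Aᵀ = Aᵀᵀ * Aᵀ := by rw [Matrix.transpose_transpose]
    rw [hA, quad14, hv0, dotProduct_zero]
  have e2 : v ⬝ᵥ ((A * Aᵀ) *ᵥ v) = v ⬝ᵥ v + (Eᵀ *ᵥ v) ⬝ᵥ (Eᵀ *ᵥ v) := by
    have hE : E * Eᵀ = Eᵀᵀ * Eᵀ := by rw [Matrix.transpose_transpose]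
    rw [h, Matrix.add_mulVec, dotProduct_add, Matrix.one_mulVec, hE, quad14]
  have n1 := sq_nonneg14 v
  have n2 := sq_nonneg14 (Eᵀ *ᵥ v)
  have hvz : v ⬝ᵥ v = 0 := by nlinarith [e1, e2]
  exact hv (dotProduct_self_eq_zero.1 hvz)

private lemma det_one_add_ne14 (E : Matrix m' n' ℝ) : (1 + Eᵀ * E).det ≠ 0 := by
  intro h0
  obtain ⟨v, hv, hv0⟩ := (Matrix.exists_mulVec_eq_zero_iff).2 h0
  have e : v ⬝ᵥ ((1 + Eᵀ * E) *ᵥ v) = v ⬝ᵥ v + (E *ᵥ v) ⬝ᵥ (E *ᵥ v) := by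
    rw [Matrix.add_mulVec, dotProduct_add, Matrix.one_mulVec, quad14]
  rw [hv0, dotProduct_zero] at e
  have n1 := sq_nonneg14 v
  have n2 := sq_nonneg14 (E *ᵥ v)
  have hvz : v ⬝ᵥ v = 0 := by nlinarith
  exact hv (dotProduct_self_eq_zero.1 hvz)

private lemma inv_quad_nonneg14 (E : Matrix m' n' ℝ) (w : n' → ℝ) :
    0 ≤ w ⬝ᵥ ((1 + Eᵀ * E)⁻¹ *ᵥ w) := by
  set G := 1 + Eᵀ * E with hG
  have hdet : IsUnit G.det := isUnit_iff_ne_zero.2 (det_one_add_ne14 E)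
  set u := G⁻¹ *ᵥ w with hu
  have hw : w = G *ᵥ u := by
    rw [hu, Matrix.mulVec_mulVec, Matrix.mul_nonsing_inv _ hdet, Matrix.one_mulVec]
  have h1 : w ⬝ᵥ (G⁻¹ *ᵥ w) = (G *ᵥ u) ⬝ᵥ u := by rw [← hu, ← hw]
  rw [h1, hG, Matrix.add_mulVec, Matrix.one_mulVec, add_dotProduct,
    dotProduct_comm ((Eᵀ * E) *ᵥ u) u, quad14]
  exact add_nonneg (sq_nonneg14 u) (sq_nonneg14 (E *ᵥ u))

private lemma M_contract14 {A : Matrix m' m' ℝ} {B : Matrix m' n' ℝ}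
    (hA : A * Aᵀ = 1 + B * Bᵀ) (w : n' → ℝ) :
    ((A⁻¹ * B) *ᵥ w) ⬝ᵥ ((A⁻¹ * B) *ᵥ w) ≤ w ⬝ᵥ w := by
  set M := A⁻¹ * B with hM
  have hG' : IsUnit (1 + B * Bᵀ).det := by
    have h' := det_one_add_ne14 Bᵀ
    rw [Matrix.transpose_transpose] at h'
    exact isUnit_iff_ne_zero.2 h'
  have hG : IsUnit (1 + Bᵀ * B).det := isUnit_iff_ne_zero.2 (det_one_add_ne14 B)
  have hMtM : Mᵀ * M = Bᵀ * (1 + B * Bᵀ)⁻¹ * B := by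
    rw [hM, Matrix.transpose_mul, Matrix.transpose_nonsing_inv]
    calc Bᵀ * Aᵀ⁻¹ * (A⁻¹ * B) = Bᵀ * (Aᵀ⁻¹ * A⁻¹) * B := by simp only [Matrix.mul_assoc]
      _ = Bᵀ * (A * Aᵀ)⁻¹ * B := by rw [Matrix.mul_inv_rev]
      _ = Bᵀ * (1 + B * Bᵀ)⁻¹ * B := by rw [hA]
  have hcomm : B * (1 + Bᵀ * B) = (1 + B * Bᵀ) * B := by
    rw [Matrix.mul_add, Matrix.add_mul, Matrix.mul_one, Matrix.one_mul, Matrix.mul_assoc]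
  have hswap : (1 + B * Bᵀ)⁻¹ * B = B * (1 + Bᵀ * B)⁻¹ := by
    have hmid : (1 + B * Bᵀ)⁻¹ * (B * (1 + Bᵀ * B)) * (1 + Bᵀ * B)⁻¹
        = (1 + B * Bᵀ)⁻¹ * ((1 + B * Bᵀ) * B) * (1 + Bᵀ * B)⁻¹ := by rw [hcomm]
    calc (1 + B * Bᵀ)⁻¹ * B
        = (1 + B * Bᵀ)⁻¹ * (B * ((1 + Bᵀ * B) * (1 + Bᵀ * B)⁻¹)) := by
          rw [Matrix.mul_nonsing_inv _ hG, Matrix.mul_one]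
      _ = (1 + B * Bᵀ)⁻¹ * (B * (1 + Bᵀ * B)) * (1 + Bᵀ * B)⁻¹ := by
          simp only [Matrix.mul_assoc]
      _ = (1 + B * Bᵀ)⁻¹ * ((1 + B * Bᵀ) * B) * (1 + Bᵀ * B)⁻¹ := hmid
      _ = ((1 + B * Bᵀ)⁻¹ * (1 + B * Bᵀ)) * (B * (1 + Bᵀ * B)⁻¹) := by
          simp only [Matrix.mul_assoc]
      _ = B * (1 + Bᵀ * B)⁻¹ := by rw [Matrix.nonsing_inv_mul _ hG', Matrix.one_mul]
  have hfinal : Mᵀ * M = 1 - (1 + Bᵀ * B)⁻¹ := by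
    rw [hMtM, Matrix.mul_assoc, hswap, ← Matrix.mul_assoc]
    calc Bᵀ * B * (1 + Bᵀ * B)⁻¹ = ((1 + Bᵀ * B) - 1) * (1 + Bᵀ * B)⁻¹ := by noncomm_ring
      _ = 1 - (1 + Bᵀ * B)⁻¹ := by
          rw [Matrix.sub_mul, Matrix.mul_nonsing_inv _ hG, Matrix.one_mul]
  have hq := quad14 M w
  rw [hfinal, Matrix.sub_mulVec, dotProduct_sub, Matrix.one_mulVec] at hq
  have hnn := inv_quad_nonneg14 B w
  linarith [hq, hnn]

private lemma N_contract14 {A : Matrix m' m' ℝ} {C : Matrix n' m' ℝ}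
    (hA : Aᵀ * A = 1 + Cᵀ * C) (hdA : IsUnit A.det) (v : m' → ℝ) :
    ((C * A⁻¹) *ᵥ v) ⬝ᵥ ((C * A⁻¹) *ᵥ v) = v ⬝ᵥ v - (A⁻¹ *ᵥ v) ⬝ᵥ (A⁻¹ *ᵥ v) := by
  set N := C * A⁻¹ with hN
  have hdAt : IsUnit Aᵀ.det := by rwa [Matrix.det_transpose]
  have hNtN : Nᵀ * N = 1 - A⁻¹ᵀ * A⁻¹ := by
    rw [hN, Matrix.transpose_mul]
    have hCC : Cᵀ * C = Aᵀ * A - 1 := by rw [hA]; noncomm_ring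
    calc A⁻¹ᵀ * Cᵀ * (C * A⁻¹) = A⁻¹ᵀ * (Cᵀ * C) * A⁻¹ := by simp only [Matrix.mul_assoc]
      _ = A⁻¹ᵀ * (Aᵀ * A - 1) * A⁻¹ := by rw [hCC]
      _ = (A⁻¹ᵀ * Aᵀ) * (A * A⁻¹) - A⁻¹ᵀ * A⁻¹ := by noncomm_ring
      _ = 1 - A⁻¹ᵀ * A⁻¹ := by
          rw [Matrix.transpose_nonsing_inv, Matrix.nonsing_inv_mul _ hdAt,
            Matrix.mul_nonsing_inv _ hdA, Matrix.one_mul]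
  have h1 := quad14 N v
  rw [hNtN, Matrix.sub_mulVec, dotProduct_sub, Matrix.one_mulVec, quad14] at h1
  linarith [h1]

private lemma contract_det14 {d : Type} [Fintype d] [DecidableEq d] (Km : Matrix d d ℝ)
    (h : ∀ t : ℝ, t ∈ Set.Icc (0:ℝ) 1 → ∀ v : d → ℝ, (1 + t • Km) *ᵥ v = 0 → v = 0) :
    0 < (1 + Km).det := by
  set f : ℝ → ℝ := fun t => (1 + t • Km).det with hf
  have hcont : Continuous f := by
    apply Continuous.matrix_det
    exact continuous_const.add (continuous_id.smul continuous_const)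
  have hne : ∀ t ∈ Set.Icc (0:ℝ) 1, f t ≠ 0 := by
    intro t ht h0
    obtain ⟨v, hv, hv0⟩ := (Matrix.exists_mulVec_eq_zero_iff).2 h0
    exact hv (h t ht v hv0)
  have hf0 : f 0 = 1 := by simp [hf]
  have hf1 : f 1 = (1 + Km).det := by simp [hf]
  by_contra hle
  push_neg at hle
  have hne1 : f 1 ≠ 0 := hne 1 ⟨zero_le_one, le_refl 1⟩
  have hflt : f 1 < 0 := lt_of_le_of_ne (by rwa [hf1]) hne1
  have hmem : (0:ℝ) ∈ Set.Icc (f 1) (f 0) := ⟨le_of_lt hflt, by rw [hf0]; norm_num⟩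
  obtain ⟨t, ht, h0⟩ := intermediate_value_Icc' zero_le_one hcont.continuousOn hmem
  exact hne t ht h0

end

variable {p q : ℕ} {S T : Matrix (Fin p ⊕ Fin q) (Fin p ⊕ Fin q) ℝ}

private lemma JJ14 : Jmat p q * Jmat p q = 1 := by
  simp [Jmat, Matrix.fromBlocks_multiply, Matrix.fromBlocks_one]

private lemma rel₁14 (hS : Sᵀ * Jmat p q * S = Jmat p q) :
    S.toBlocks₁₁ᵀ * S.toBlocks₁₁ = 1 + S.toBlocks₂₁ᵀ * S.toBlocks₂₁ := by
  have hSb : S = fromBlocks S.toBlocks₁₁ S.toBlocks₁₂ S.toBlocks₂₁ S.toBlocks₂₂ :=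
    (fromBlocks_toBlocks S).symm
  rw [hSb] at hS
  rw [Jmat, Matrix.fromBlocks_transpose, Matrix.fromBlocks_multiply,
    Matrix.fromBlocks_multiply] at hS
  have h11 := congrArg Matrix.toBlocks₁₁ hS
  simp [Matrix.toBlocks_fromBlocks₁₁, Matrix.mul_neg] at h11
  linear_combination (norm := noncomm_ring) h11

private lemma swap_rel14 (hS : Sᵀ * Jmat p q * S = Jmat p q) :
    S * Jmat p q * Sᵀ = Jmat p q := by
  have h1 : Jmat p q * Sᵀ * Jmat p q * S = 1 := by
    calc Jmat p q * Sᵀ * Jmat p q * S = Jmat p q * (Sᵀ * Jmat p q * S) := by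
          simp only [Matrix.mul_assoc]
      _ = 1 := by rw [hS, JJ14]
  have h2 : S * (Jmat p q * Sᵀ * Jmat p q) = 1 := by
    rw [mul_eq_one_comm]; exact h1
  calc S * Jmat p q * Sᵀ = S * Jmat p q * Sᵀ * (Jmat p q * Jmat p q) := by
        rw [JJ14, Matrix.mul_one]
    _ = (S * (Jmat p q * Sᵀ * Jmat p q)) * Jmat p q := by simp only [Matrix.mul_assoc]
    _ = Jmat p q := by rw [h2, Matrix.one_mul]

private lemma rel₂14 (hS : Sᵀ * Jmat p q * S = Jmat p q) :
    S.toBlocks₁₁ * S.toBlocks₁₁ᵀ = 1 + S.toBlocks₁₂ * S.toBlocks₁₂ᵀ := by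
  have hS2 := swap_rel14 hS
  have hSb : S = fromBlocks S.toBlocks₁₁ S.toBlocks₁₂ S.toBlocks₂₁ S.toBlocks₂₂ :=
    (fromBlocks_toBlocks S).symm
  rw [hSb] at hS2
  rw [Jmat, Matrix.fromBlocks_transpose, Matrix.fromBlocks_multiply,
    Matrix.fromBlocks_multiply] at hS2
  have h11 := congrArg Matrix.toBlocks₁₁ hS2
  simp [Matrix.toBlocks_fromBlocks₁₁, Matrix.mul_neg] at h11
  linear_combination (norm := noncomm_ring) h11

private lemma toBlocks₁₁_mul14 (S T : Matrix (Fin p ⊕ Fin q) (Fin p ⊕ Fin q) ℝ) :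
    (S * T).toBlocks₁₁ = S.toBlocks₁₁ * T.toBlocks₁₁ + S.toBlocks₁₂ * T.toBlocks₂₁ := by
  have h : S * T = fromBlocks
      (S.toBlocks₁₁ * T.toBlocks₁₁ + S.toBlocks₁₂ * T.toBlocks₂₁)
      (S.toBlocks₁₁ * T.toBlocks₁₂ + S.toBlocks₁₂ * T.toBlocks₂₂)
      (S.toBlocks₂₁ * T.toBlocks₁₁ + S.toBlocks₂₂ * T.toBlocks₂₁)
      (S.toBlocks₂₁ * T.toBlocks₁₂ + S.toBlocks₂₂ * T.toBlocks₂₂) := by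
    conv_lhs => rw [← fromBlocks_toBlocks S, ← fromBlocks_toBlocks T]
    rw [Matrix.fromBlocks_multiply]
  rw [h, Matrix.toBlocks_fromBlocks₁₁]

private lemma toBlocks₁₁_one14 :
    (1 : Matrix (Fin p ⊕ Fin q) (Fin p ⊕ Fin q) ℝ).toBlocks₁₁ = 1 := by
  conv_lhs => rw [← Matrix.fromBlocks_one]
  rw [Matrix.toBlocks_fromBlocks₁₁]

set_option maxHeartbeats 1600000 in
/-- The key sign-multiplicativity lemma. -/
private lemma key_det14 (hS : Sᵀ * Jmat p q * S = Jmat p q)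
    (hT : Tᵀ * Jmat p q * T = Jmat p q) :
    ∃ c : ℝ, 0 < c ∧
      ((S * T).toBlocks₁₁).det = (S.toBlocks₁₁).det * (T.toBlocks₁₁).det * c := by
  set A := S.toBlocks₁₁ with hA
  set Bm := S.toBlocks₁₂ with hBm
  set At := T.toBlocks₁₁ with hAt
  set Ct := T.toBlocks₂₁ with hCt
  have hA2 : A * Aᵀ = 1 + Bm * Bmᵀ := rel₂14 hS
  have hT1 : Atᵀ * At = 1 + Ctᵀ * Ct := rel₁14 hT
  have hdA : IsUnit A.det := isUnit_iff_ne_zero.2 (det_ne_of14 hA2)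
  have hdAt : IsUnit At.det := by
    have h' : Atᵀ * Atᵀᵀ = 1 + Ctᵀ * Ctᵀᵀ := by
      rw [Matrix.transpose_transpose, Matrix.transpose_transpose]; exact hT1
    have h'' := det_ne_of14 h'
    rw [Matrix.det_transpose] at h''
    exact isUnit_iff_ne_zero.2 h''
  set M := A⁻¹ * Bm with hM
  set N := Ct * At⁻¹ with hN
  have hinj : ∀ t : ℝ, t ∈ Set.Icc (0:ℝ) 1 → ∀ v, (1 + t • (M * N)) *ᵥ v = 0 → v = 0 := by
    intro t ht v hv0
    have hv : v = (-t) • ((M * N) *ᵥ v) := by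
      have h1 : v + t • ((M * N) *ᵥ v) = 0 := by
        rw [← hv0, Matrix.add_mulVec, Matrix.one_mulVec, Matrix.smul_mulVec]
      rw [neg_smul, eq_neg_iff_add_eq_zero]
      exact h1
    have e1 : v ⬝ᵥ v = t^2 * ((M *ᵥ (N *ᵥ v)) ⬝ᵥ (M *ᵥ (N *ᵥ v))) := by
      nth_rewrite 1 [hv]; nth_rewrite 2 [hv]
      rw [smul_dotProduct, dotProduct_smul, smul_eq_mul, smul_eq_mul,
        ← Matrix.mulVec_mulVec]
      ring
    have e2 := M_contract14 hA2 (N *ᵥ v)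
    rw [← hM] at e2
    have e3 := N_contract14 hT1 hdAt v
    rw [← hN] at e3
    have ht2 : t^2 ≤ 1 := by nlinarith [ht.1, ht.2]
    have hnnM := sq_nonneg14 (M *ᵥ (N *ᵥ v))
    have hnnN := sq_nonneg14 (N *ᵥ v)
    have hnnA := sq_nonneg14 (At⁻¹ *ᵥ v)
    have hAv : (At⁻¹ *ᵥ v) ⬝ᵥ (At⁻¹ *ᵥ v) = 0 := by nlinarith
    have hAv0 : At⁻¹ *ᵥ v = 0 := dotProduct_self_eq_zero.1 hAv
    have hvm : v = At *ᵥ (At⁻¹ *ᵥ v) := by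
      rw [Matrix.mulVec_mulVec, Matrix.mul_nonsing_inv _ hdAt, Matrix.one_mulVec]
    rw [hvm, hAv0, Matrix.mulVec_zero]
  have hKpos : 0 < (1 + M * N).det := contract_det14 (M * N) hinj
  refine ⟨(1 + M * N).det, hKpos, ?_⟩
  have hblock : (S * T).toBlocks₁₁ = A * At + Bm * Ct := toBlocks₁₁_mul14 S T
  have hfact : A * At + Bm * Ct = A * ((1 + M * N) * At) := by
    rw [Matrix.add_mul, Matrix.one_mul, Matrix.mul_add, hM, hN]
    congr 1
    calc Bm * Ct = (A * (A⁻¹ * Bm)) * (Ct * At⁻¹ * At) := by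
          rw [Matrix.mul_nonsing_inv_cancel_left _ _ hdA,
            Matrix.nonsing_inv_mul_cancel_right _ _ hdAt]
      _ = A * (A⁻¹ * Bm * (Ct * At⁻¹) * At) := by simp only [Matrix.mul_assoc]
  rw [hblock, hfact, Matrix.det_mul, Matrix.det_mul]
  ring

private lemma mul_rel14 (hS : Sᵀ * Jmat p q * S = Jmat p q)
    (hT : Tᵀ * Jmat p q * T = Jmat p q) :
    (S * T)ᵀ * Jmat p q * (S * T) = Jmat p q := by
  rw [Matrix.transpose_mul]
  calc Tᵀ * Sᵀ * Jmat p q * (S * T) = Tᵀ * (Sᵀ * Jmat p q * S) * T := by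
        simp only [Matrix.mul_assoc]
    _ = Tᵀ * Jmat p q * T := by rw [hS]
    _ = Jmat p q := hT

private lemma inv_rel14 (hS : Sᵀ * Jmat p q * S = Jmat p q) (hdet : IsUnit S.det) :
    (S⁻¹)ᵀ * Jmat p q * S⁻¹ = Jmat p q := by
  have hdt : IsUnit Sᵀ.det := by rwa [Matrix.det_transpose]
  calc (S⁻¹)ᵀ * Jmat p q * S⁻¹
      = Sᵀ⁻¹ * Jmat p q * S⁻¹ := by rw [Matrix.transpose_nonsing_inv]
    _ = Sᵀ⁻¹ * (Sᵀ * Jmat p q * S) * S⁻¹ := by rw [hS]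
    _ = (Sᵀ⁻¹ * Sᵀ) * Jmat p q * (S * S⁻¹) := by simp only [Matrix.mul_assoc]
    _ = Jmat p q := by
        rw [Matrix.nonsing_inv_mul _ hdt, Matrix.mul_nonsing_inv _ hdet,
          Matrix.one_mul, Matrix.mul_one]

private noncomputable def detPoly14 (p q : ℕ)
    (u w : Matrix (Fin p ⊕ Fin q) (Fin p ⊕ Fin q) ℝ) :
    MvPolynomial ((Fin p ⊕ Fin q) × (Fin p ⊕ Fin q)) ℝ :=
  Matrix.det (Matrix.of fun i j : Fin p =>
     ∑ k : Fin p ⊕ Fin q, ∑ l : Fin p ⊕ Fin q,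
       MvPolynomial.C (u (Sum.inl i) k * w l (Sum.inl j)) * MvPolynomial.X (k, l))

private lemma eval_detPoly14 (p q : ℕ) (u w A : Matrix (Fin p ⊕ Fin q) (Fin p ⊕ Fin q) ℝ) :
    MvPolynomial.eval (mPt A) (detPoly14 p q u w) = ((u * A * w).toBlocks₁₁).det := by
  rw [detPoly14, RingHom.map_det]
  congr 1
  ext i j
  simp only [RingHom.mapMatrix_apply, Matrix.map_apply, Matrix.of_apply, map_sum, _root_.map_mul,
    MvPolynomial.eval_C, MvPolynomial.eval_X, Matrix.toBlocks₁₁, Matrix.mul_apply, mPt]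
  rw [Finset.sum_comm]
  refine Finset.sum_congr rfl fun l _ => ?_
  rw [Finset.sum_mul]
  refine Finset.sum_congr rfl fun k _ => ?_
  ring

private lemma soo_rel14 {Am : Matrix (Fin p) (Fin p) ℝ} {Bq : Matrix (Fin q) (Fin q) ℝ}
    (hAm : Amᵀ * Am = 1) (hBq : Bqᵀ * Bq = 1) :
    (Matrix.fromBlocks Am 0 0 Bq)ᵀ * Jmat p q * Matrix.fromBlocks Am 0 0 Bq = Jmat p q := by
  rw [Jmat, Matrix.fromBlocks_transpose, Matrix.fromBlocks_multiply,
    Matrix.fromBlocks_multiply]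
  simp [hAm, hBq, Matrix.mul_neg]

private lemma subset_zClosure14 (s : Set (Matrix (Fin p ⊕ Fin q) (Fin p ⊕ Fin q) ℝ)) :
    s ⊆ zClosure s := fun A hA f hf => hf A hA

end Stmt14Aux

/- Statement 14: a sequence converging to a representation with Zariski-dense image in
SO(p)×SO(q), each term conjugate to SO(p)×SO(q) or S(O(p)×O(q)), is eventually
conjugate to SO(p)×SO(q). -/
theorem stmt_14 (Γ : Type) [Group Γ] (hΓ : Group.FG Γ) (p q : ℕ)
    (hp : 3 ≤ p) (hq : 3 ≤ q)
    (ρ0 : Γ →* Matrix (Fin p ⊕ Fin q) (Fin p ⊕ Fin q) ℝ)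
    (h0 : ∀ γ, ρ0 γ ∈ SOpq p q)
    (hdense : zClosure (Set.range ⇑ρ0) = blockSO p q)
    (ρseq : ℕ → (Γ →* Matrix (Fin p ⊕ Fin q) (Fin p ⊕ Fin q) ℝ))
    (hmem : ∀ n γ, ρseq n γ ∈ SOpq p q)
    (hconv : ∀ γ, Filter.Tendsto (fun n => ρseq n γ) Filter.atTop (nhds (ρ0 γ)))
    (hconj : ∀ n,
      (∃ g ∈ SOpq p q,
        zClosure (Set.range ⇑(ρseq n)) = (fun B => g * B * g⁻¹) '' blockSO p q) ∨
      (∃ g ∈ SOpq p q,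
        zClosure (Set.range ⇑(ρseq n)) = (fun B => g * B * g⁻¹) '' blockSOO p q)) :
    ∃ N : ℕ, ∀ n, N ≤ n →
      ∃ g ∈ SOpq p q,
        zClosure (Set.range ⇑(ρseq n)) = (fun B => g * B * g⁻¹) '' blockSO p q := by
  classical
  obtain ⟨Gs, hGs⟩ := hΓ.out
  have hφc : Continuous fun A : Matrix (Fin p ⊕ Fin q) (Fin p ⊕ Fin q) ℝ =>
      (A.toBlocks₁₁).det := by
    apply Continuous.matrix_det
    apply continuous_matrix
    intro i j
    exact (continuous_apply (Sum.inl j)).comp (continuous_apply (Sum.inl i))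
  have hρ0 : ∀ γ : Γ, ((ρ0 γ).toBlocks₁₁).det = 1 := by
    intro γ
    have h1 : ρ0 γ ∈ zClosure (Set.range ⇑ρ0) := subset_zClosure14 _ ⟨γ, rfl⟩
    rw [hdense] at h1
    obtain ⟨M, hM, N, hN, hE⟩ := h1
    rw [hE, Matrix.toBlocks_fromBlocks₁₁]
    exact hM.1
  have hev : ∀ᶠ nn in Filter.atTop, ∀ γ ∈ Gs, 0 < ((ρseq nn γ).toBlocks₁₁).det := by
    rw [Filter.eventually_all_finset]
    intro γ hγ
    have h1 : Filter.Tendsto (fun nn => ((ρseq nn γ).toBlocks₁₁).det)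
        Filter.atTop (nhds (((ρ0 γ).toBlocks₁₁).det)) :=
      (hφc.tendsto _).comp (hconv γ)
    rw [hρ0 γ] at h1
    exact h1.eventually (eventually_gt_nhds one_pos)
  obtain ⟨N0, hN0⟩ := Filter.eventually_atTop.1 hev
  refine ⟨N0, fun nn hnn => ?_⟩
  have hrel : ∀ γ : Γ, (ρseq nn γ)ᵀ * Jmat p q * ρseq nn γ = Jmat p q :=
    fun γ => (hmem nn γ).2
  -- positivity of the top-left block determinant for every group element
  have hpos : ∀ γ : Γ, 0 < ((ρseq nn γ).toBlocks₁₁).det := by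
    let H : Subgroup Γ :=
      { carrier := {γ : Γ | 0 < ((ρseq nn γ).toBlocks₁₁).det}
        one_mem' := by
          simp only [Set.mem_setOf_eq, _root_.map_one, toBlocks₁₁_one14, Matrix.det_one]
          norm_num
        mul_mem' := by
          intro a b ha hb
          simp only [Set.mem_setOf_eq, _root_.map_mul] at *
          obtain ⟨c, hc, he⟩ := key_det14 (hrel a) (hrel b)
          rw [he]
          exact mul_pos (mul_pos ha hb) hc
        inv_mem' := by
          intro a ha
          simp only [Set.mem_setOf_eq] at *
          obtain ⟨c, hc, he⟩ := key_det14 (hrel a⁻¹) (hrel a)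
          have h1 : (ρseq nn a⁻¹) * (ρseq nn a) = 1 := by
            rw [← _root_.map_mul, inv_mul_cancel, _root_.map_one]
          rw [h1, toBlocks₁₁_one14, Matrix.det_one] at he
          by_contra hcn
          push_neg at hcn
          have h2 := mul_le_mul_of_nonneg_right
            (mul_le_mul_of_nonneg_right hcn (le_of_lt ha)) (le_of_lt hc)
          rw [zero_mul, zero_mul] at h2
          linarith [he, h2] }
    intro γ
    have hle : Subgroup.closure (Gs : Set Γ) ≤ H :=
      (Subgroup.closure_le H).2 (fun x hx => hN0 nn hnn x hx)
    rw [hGs] at hle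
    exact hle (Subgroup.mem_top γ)
  rcases hconj nn with hcase | hcase
  · exact hcase
  exfalso
  obtain ⟨g, hg, himg⟩ := hcase
  have hgdet : IsUnit g.det := by rw [hg.1]; exact isUnit_one
  have hgrel : gᵀ * Jmat p q * g = Jmat p q := hg.2
  have hginv : (g⁻¹)ᵀ * Jmat p q * g⁻¹ = Jmat p q := inv_rel14 hgrel hgdet
  have hconjX : ∀ X : Matrix (Fin p ⊕ Fin q) (Fin p ⊕ Fin q) ℝ,
      g⁻¹ * (g * X * g⁻¹) * g = X := by
    intro X
    calc g⁻¹ * (g * X * g⁻¹) * g = (g⁻¹ * g) * X * (g⁻¹ * g) := by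
          simp only [Matrix.mul_assoc]
      _ = X := by rw [Matrix.nonsing_inv_mul _ hgdet, Matrix.one_mul, Matrix.mul_one]
  set F : MvPolynomial ((Fin p ⊕ Fin q) × (Fin p ⊕ Fin q)) ℝ :=
    detPoly14 p q g⁻¹ g - 1 with hF
  have hFeval : ∀ A, MvPolynomial.eval (mPt A) F = ((g⁻¹ * A * g).toBlocks₁₁).det - 1 := by
    intro A
    rw [hF, _root_.map_sub, _root_.map_one, eval_detPoly14]
  -- the polynomial F vanishes on the image of ρseq nn
  have hvanish : ∀ B ∈ Set.range ⇑(ρseq nn), MvPolynomial.eval (mPt B) F = 0 := by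
    rintro _ ⟨γ, rfl⟩
    have hin : ρseq nn γ ∈ zClosure (Set.range ⇑(ρseq nn)) := subset_zClosure14 _ ⟨γ, rfl⟩
    rw [himg] at hin
    obtain ⟨X, hX, hXe⟩ := hin
    have hXe' : g * X * g⁻¹ = ρseq nn γ := hXe
    obtain ⟨Am, hAm, Bq, hBq, hdprod, hXdef⟩ := hX
    have hXrel : Xᵀ * Jmat p q * X = Jmat p q := by
      rw [hXdef]; exact soo_rel14 hAm hBq
    have htopX : X.toBlocks₁₁ = Am := by rw [hXdef, Matrix.toBlocks_fromBlocks₁₁]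
    have hAmdet2 : Am.det ^ 2 = 1 := by
      have h' := congrArg Matrix.det hAm
      rwa [Matrix.det_mul, Matrix.det_transpose, ← sq, Matrix.det_one] at h'
    obtain ⟨c₁, hc₁, he₁⟩ := key_det14 hgrel (mul_rel14 hXrel hginv)
    obtain ⟨c₂, hc₂, he₂⟩ := key_det14 hXrel hginv
    obtain ⟨c₃, hc₃, he₃⟩ := key_det14 hgrel hginv
    rw [Matrix.mul_nonsing_inv _ hgdet, toBlocks₁₁_one14, Matrix.det_one] at he₃
    have hρeq : ρseq nn γ = g * (X * g⁻¹) := by rw [← hXe', Matrix.mul_assoc]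
    have hφρ : 0 < ((g * (X * g⁻¹)).toBlocks₁₁).det := by rw [← hρeq]; exact hpos γ
    rw [he₁, he₂, htopX] at hφρ
    -- from 1 = dg * dg' * c₃ deduce 0 < dg * dg'
    have hP : 0 < (g.toBlocks₁₁).det * ((g⁻¹).toBlocks₁₁).det := by
      by_contra hcn
      push_neg at hcn
      have := mul_le_mul_of_nonneg_right hcn (le_of_lt hc₃)
      rw [zero_mul] at this
      linarith [he₃, this]
    have hre : (g.toBlocks₁₁).det * (Am.det * ((g⁻¹).toBlocks₁₁).det * c₂) * c₁
        = Am.det * ((g.toBlocks₁₁).det * ((g⁻¹).toBlocks₁₁).det * c₂ * c₁) := by ring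
    rw [hre] at hφρ
    have h6 : 0 < (g.toBlocks₁₁).det * ((g⁻¹).toBlocks₁₁).det * c₂ * c₁ :=
      mul_pos (mul_pos hP hc₂) hc₁
    have hdApos : 0 < Am.det := by
      by_contra hcn
      push_neg at hcn
      nlinarith [hφρ, h6]
    have hdA1 : Am.det = 1 := by
      have hfac : (Am.det - 1) * (Am.det + 1) = 0 := by linear_combination hAmdet2
      rcases mul_eq_zero.1 hfac with h' | h'
      · linarith
      · linarith
    rw [hFeval, ← hXe', hconjX, htopX, hdA1, sub_self]
  -- the bad point in the conjugate of blockSOO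
  have hp0 : 0 < p := by omega
  have hq0 : 0 < q := by omega
  set A₀ : Matrix (Fin p) (Fin p) ℝ :=
    Matrix.diagonal (fun i => if i = (⟨0, hp0⟩ : Fin p) then (-1:ℝ) else 1) with hA₀
  set B₀ : Matrix (Fin q) (Fin q) ℝ :=
    Matrix.diagonal (fun i => if i = (⟨0, hq0⟩ : Fin q) then (-1:ℝ) else 1) with hB₀
  have hA₀mem : A₀ ∈ On p := by
    show A₀ᵀ * A₀ = 1
    rw [hA₀, Matrix.diagonal_transpose, Matrix.diagonal_mul_diagonal]
    ext i j
    rcases eq_or_ne i j with rfl | hij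
    · rw [Matrix.diagonal_apply_eq, Matrix.one_apply_eq]
      by_cases h : i = (⟨0, hp0⟩ : Fin p) <;> simp [h]
    · rw [Matrix.diagonal_apply_ne _ hij, Matrix.one_apply_ne hij]
  have hB₀mem : B₀ ∈ On q := by
    show B₀ᵀ * B₀ = 1
    rw [hB₀, Matrix.diagonal_transpose, Matrix.diagonal_mul_diagonal]
    ext i j
    rcases eq_or_ne i j with rfl | hij
    · rw [Matrix.diagonal_apply_eq, Matrix.one_apply_eq]
      by_cases h : i = (⟨0, hq0⟩ : Fin q) <;> simp [h]
    · rw [Matrix.diagonal_apply_ne _ hij, Matrix.one_apply_ne hij]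
  have hA₀det : A₀.det = -1 := by
    rw [hA₀, Matrix.det_diagonal]
    rw [Finset.prod_eq_single (⟨0, hp0⟩ : Fin p)]
    · simp
    · intro b _ hb; simp [hb]
    · intro h; exact absurd (Finset.mem_univ _) h
  have hB₀det : B₀.det = -1 := by
    rw [hB₀, Matrix.det_diagonal]
    rw [Finset.prod_eq_single (⟨0, hq0⟩ : Fin q)]
    · simp
    · intro b _ hb; simp [hb]
    · intro h; exact absurd (Finset.mem_univ _) h
  have hX₀mem : Matrix.fromBlocks A₀ 0 0 B₀ ∈ blockSOO p q :=
    ⟨A₀, hA₀mem, B₀, hB₀mem, by rw [hA₀det, hB₀det]; norm_num, rfl⟩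
  have hbad : g * Matrix.fromBlocks A₀ 0 0 B₀ * g⁻¹ ∈ zClosure (Set.range ⇑(ρseq nn)) := by
    rw [himg]
    exact ⟨Matrix.fromBlocks A₀ 0 0 B₀, hX₀mem, rfl⟩
  have hzero := hbad F hvanish
  rw [hFeval, hconjX, Matrix.toBlocks_fromBlocks₁₁, hA₀det] at hzero
  norm_num at hzero


end Paper
end
end

section
/- Let T be a linear automorphism of finite order of an n-dimensional complex vector space V (hence T is diagonalizable). Let S be the set of eigenvalues of T and for λ ∈ ℂ let t_λ be the dimension of the λ-eigenspace of T (t_λ = 0 if λ ∉ S). Then the dimension of the 1-eigenspace of the induced automorphism of the exterior square Λ²V equals C(t_1, 2) + C(t_{−1}, 2) + (1/2)·Σ_{λ ∈ S ∖ {1,−1}} t_λ · t_{λ̄}, where C(t,2) = t(t−1)/2 and λ̄ is the complex conjugate (equivalently, inverse) of λ. -/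
/- Statement 16: dimension of the 1-eigenspace of the induced action of a
finite-order automorphism on the exterior square. -/

noncomputable section

open scoped Classical

open Module Submodule ExteriorAlgebra Polynomial Finset

section Aux


variable {K : Type*} [Field K] {V : Type*} [AddCommGroup V] [Module K V]

lemma exists_eigenbasis [FiniteDimensional K V] (f : Module.End K V)
    (h : ⨆ μ : K, f.eigenspace μ = ⊤) :
    ∃ (n : ℕ) (b : Basis (Fin n) K V) (μ : Fin n → K), ∀ i, f (b i) = μ i • b i := by
  set t : Set V := ⋃ μ : K, (f.eigenspace μ : Set V) with ht
  have hspan : span K t = ⊤ := by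
    rw [ht, span_iUnion]
    simpa [Submodule.span_eq] using h
  obtain ⟨s, hst, -, hts, hli⟩ :=
    exists_linearIndepOn_id_extension (linearIndependent_empty K V) (Set.empty_subset t)
  have hspan2 : ⊤ ≤ span K (Set.range ((↑) : s → V)) := by
    rw [Subtype.range_coe_subtype, Set.setOf_mem_eq]
    rw [← hspan]
    exact span_le.2 hts
  let b : Basis s K V := Basis.mk hli hspan2
  have : FiniteDimensional K V := inferInstance
  have hfin : Finite s := by
    have := FiniteDimensional.fintypeBasisIndex b
    exact Finite.of_fintype _
  have : Fintype s := Fintype.ofFinite s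
  have key : ∀ i : s, ∃ c : K, f (b i) = c • b i := by
    intro i
    have hit : (i : V) ∈ t := hst i.2
    rw [ht, Set.mem_iUnion] at hit
    obtain ⟨c, hc⟩ := hit
    exact ⟨c, by rw [show b i = (i : V) from Basis.mk_apply hli hspan2 i]; exact Module.End.mem_eigenspace_iff.mp hc⟩
  choose μ hμ using key
  exact ⟨Fintype.card s, b.reindex (Fintype.equivFin s),
    fun i => μ ((Fintype.equivFin s).symm i),
    fun i => by simpa [Basis.reindex_apply] using hμ ((Fintype.equivFin s).symm i)⟩



variable {K : Type*} [Field K] {V : Type*} [AddCommGroup V] [Module K V]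

lemma eigenspace_eq_span {ι : Type*} [Fintype ι] (b : Basis ι K V) (g : Module.End K V)
    (μ : ι → K) (hg : ∀ i, g (b i) = μ i • b i) (lam : K) :
    g.eigenspace lam = span K (b '' {i | μ i = lam}) := by
  apply le_antisymm
  · intro x hx
    rw [Module.End.mem_eigenspace_iff] at hx
    have hrep : ∀ j, μ j * b.repr x j = lam * b.repr x j := by
      intro j
      have h1 : g x = ∑ i, (b.repr x i * μ i) • b i := by
        conv_lhs => rw [← b.sum_repr x]
        rw [map_sum]
        simp [hg, smul_smul]
      have h2 : lam • x = ∑ i, (lam * b.repr x i) • b i := by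
        conv_lhs => rw [← b.sum_repr x]
        rw [Finset.smul_sum]
        simp [smul_smul]
      have := h1.symm.trans (hx.trans h2)
      have hco := b.repr.congr_arg this
      rw [map_sum, map_sum] at hco
      have := congrFun (congrArg DFunLike.coe hco) j
      simpa [Finsupp.single_apply, mul_comm] using this
    have : x = ∑ i ∈ Finset.univ.filter (fun i => μ i = lam), b.repr x i • b i := by
      conv_lhs => rw [← b.sum_repr x]
      rw [← Finset.sum_filter_add_sum_filter_not Finset.univ (fun i => μ i = lam)]
      have : ∑ i ∈ Finset.univ.filter (fun i => ¬ μ i = lam), b.repr x i • b i = 0 := by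
        apply Finset.sum_eq_zero
        intro j hj
        simp only [Finset.mem_filter] at hj
        have := hrep j
        have hzero : b.repr x j = 0 := by
          by_contra hne
          exact hj.2 (mul_right_cancel₀ hne this)
        simp [hzero]
      rw [this, add_zero]
    rw [this]
    apply Submodule.sum_mem
    intro j hj
    simp only [Finset.mem_filter] at hj
    exact Submodule.smul_mem _ _ (Submodule.subset_span ⟨j, hj.2, rfl⟩)
  · rw [span_le]
    rintro - ⟨i, hi, rfl⟩
    rw [SetLike.mem_coe, Module.End.mem_eigenspace_iff, hg i, hi]

lemma finrank_eigenspace_eq_card {ι : Type*} [Fintype ι] (b : Basis ι K V) (g : Module.End K V)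
    (μ : ι → K) (hg : ∀ i, g (b i) = μ i • b i) (lam : K) :
    finrank K (g.eigenspace lam) = (Finset.univ.filter (fun i => μ i = lam)).card := by
  rw [eigenspace_eq_span b g μ hg lam]
  have : b '' {i | μ i = lam} = Set.range (fun i : {i // μ i = lam} => b i) := by
    ext x; simp [Set.mem_image, Set.mem_range]
  rw [this]
  have hli : LinearIndependent K (fun i : {i // μ i = lam} => b i) :=
    b.linearIndependent.comp _ Subtype.val_injective
  rw [finrank_span_eq_card hli]
  simp [Fintype.card_subtype]



variable {K : Type*} [Field K] {V : Type*} [AddCommGroup V] [Module K V]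

lemma charpoly_diag [FiniteDimensional K V] {n : ℕ} (b : Basis (Fin n) K V)
    (f : V →ₗ[K] V) (μ : Fin n → K) (hg : ∀ i, f (b i) = μ i • b i) :
    (LinearMap.charpoly f).roots = Multiset.map μ Finset.univ.val := by
  have hM : LinearMap.toMatrix b b f = Matrix.diagonal μ := by
    ext i j
    rw [LinearMap.toMatrix_apply, hg j, map_smul]
    by_cases h : i = j
    · subst h; simp [Matrix.diagonal_apply_eq]
    · rw [Matrix.diagonal_apply_ne _ (by exact h)]
      simp only [Finsupp.smul_single, Basis.repr_self, smul_eq_mul, mul_one,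
        Finsupp.single_apply]
      rw [if_neg (by exact fun e => h e.symm)]
  have hcp : LinearMap.charpoly f = ∏ i, (X - C (μ i)) := by
    rw [← f.charpoly_toMatrix b, hM]
    rw [Matrix.charpoly]
    have : Matrix.charmatrix (Matrix.diagonal μ) = Matrix.diagonal (fun i => X - C (μ i)) := by
      ext i j
      by_cases h : i = j
      · subst h; simp [Matrix.charmatrix_apply_eq]
      · simp [Matrix.charmatrix_apply_ne _ _ _ h, Matrix.diagonal_apply_ne _ h]
    rw [this, Matrix.det_diagonal]
  rw [hcp]
  have : ∏ i, (X - C (μ i)) = (Multiset.map (fun a => X - C a) (Multiset.map μ Finset.univ.val)).prod := by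
    rw [Multiset.map_map]
    rfl
  rw [this, Polynomial.roots_multiset_prod_X_sub_C]



variable {K : Type*} [Field K] {V : Type*} [AddCommGroup V] [Module K V]

-- invariance of the exterior square under ExteriorAlgebra.map
lemma map_mem_exteriorPower_two (f : V →ₗ[K] V) {x : ExteriorAlgebra K V}
    (hx : x ∈ ⋀[K]^2 V) : ExteriorAlgebra.map f x ∈ ⋀[K]^2 V := by
  rw [show (⋀[K]^2 V) = LinearMap.range (ι K : V →ₗ[K] _) * LinearMap.range (ι K) from by
    rw [exteriorPower, pow_two]] at hx ⊢
  refine Submodule.mul_induction_on hx ?_ ?_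
  · rintro m ⟨a, rfl⟩ n ⟨c, rfl⟩
    rw [map_mul, map_apply_ι, map_apply_ι]
    exact Submodule.mul_mem_mul ⟨f a, rfl⟩ ⟨f c, rfl⟩
  · intro a c ha hc
    rw [map_add]; exact add_mem ha hc

variable {n : ℕ} (b : Basis (Fin n) K V)

-- membership of pair wedges
lemma wedge_mem (i j : Fin n) : ι K (b i) * ι K (b j) ∈ ⋀[K]^2 V := by
  rw [show (⋀[K]^2 V) = LinearMap.range (ι K : V →ₗ[K] _) * LinearMap.range (ι K) from by
    rw [exteriorPower, pow_two]]
  exact Submodule.mul_mem_mul ⟨b i, rfl⟩ ⟨b j, rfl⟩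

-- span of pair wedges
lemma wedge_span :
    span K (Set.range fun p : {p : Fin n × Fin n // p.1 < p.2} =>
      ι K (b p.1.1) * ι K (b p.1.2)) = ⋀[K]^2 V := by
  apply le_antisymm
  · rw [span_le]
    rintro - ⟨p, rfl⟩
    exact wedge_mem b p.1.1 p.1.2
  · rw [show (⋀[K]^2 V) = LinearMap.range (ι K : V →ₗ[K] _) * LinearMap.range (ι K) from by
      rw [exteriorPower, pow_two]]
    rw [Submodule.mul_le]
    rintro - ⟨x, rfl⟩ - ⟨y, rfl⟩
    have pair_mem : ∀ i j : Fin n, ι K (b i) * ι K (b j) ∈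
        span K (Set.range fun p : {p : Fin n × Fin n // p.1 < p.2} =>
          ι K (b p.1.1) * ι K (b p.1.2)) := by
      intro i j
      rcases lt_trichotomy i j with h | h | h
      · exact subset_span ⟨⟨(i, j), h⟩, rfl⟩
      · subst h; rw [ι_sq_zero]; exact zero_mem _
      · have : ι K (b i) * ι K (b j) = - (ι K (b j) * ι K (b i)) := by
          have h0 := ι_add_mul_swap (R := K) (b j) (b i)
          rw [add_comm] at h0
          exact (neg_eq_of_add_eq_zero_left h0).symm
        rw [this]
        exact neg_mem (subset_span ⟨⟨(j, i), h⟩, rfl⟩)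
    have hx : ι K x = ∑ i, b.repr x i • ι K (b i) := by
      conv_lhs => rw [← b.sum_repr x]
      rw [map_sum]; simp
    have hy : ι K y = ∑ j, b.repr y j • ι K (b j) := by
      conv_lhs => rw [← b.sum_repr y]
      rw [map_sum]; simp
    rw [hx, hy, Finset.sum_mul]
    apply Submodule.sum_mem
    intro i _
    rw [smul_mul_assoc, Finset.mul_sum]
    apply Submodule.smul_mem
    apply Submodule.sum_mem
    intro j _
    rw [mul_smul_comm]
    exact Submodule.smul_mem _ _ (pair_mem i j)



variable {K : Type*} [Field K] {V : Type*} [AddCommGroup V] [Module K V]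
variable {n : ℕ} (b : Basis (Fin n) K V)

/-- The alternating bilinear form dual to a pair of basis indices. -/
def dualAlt (i j : Fin n) : V [⋀^Fin 2]→ₗ[K] K :=
  MultilinearMap.alternatization
    ((MultilinearMap.mkPiAlgebra K (Fin 2) K).compLinearMap ![b.coord i, b.coord j])

lemma dualAlt_apply (i j : Fin n) (x y : V) :
    dualAlt b i j ![x, y] = b.coord i x * b.coord j y - b.coord i y * b.coord j x := by
  have huniv : (Finset.univ : Finset (Equiv.Perm (Fin 2))) = {1, Equiv.swap 0 1} := by decide
  rw [dualAlt, MultilinearMap.alternatization_apply, huniv]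
  rw [Finset.sum_insert (by decide), Finset.sum_singleton]
  simp [MultilinearMap.domDomCongr_apply, MultilinearMap.compLinearMap_apply,
    MultilinearMap.mkPiAlgebra_apply, Fin.prod_univ_two, Equiv.swap_apply_left,
    Equiv.swap_apply_right, sub_eq_add_neg]

lemma dualAlt_apply_basis (i j k l : Fin n) :
    dualAlt b i j ![b k, b l] =
      (if k = i then 1 else 0) * (if l = j then 1 else 0)
        - (if l = i then 1 else 0) * (if k = j then 1 else 0) := by
  rw [dualAlt_apply]
  simp [Basis.coord_apply, Finsupp.single_apply, Basis.repr_self, eq_comm]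

lemma wedge_linearIndependent :
    LinearIndependent K (fun p : {p : Fin n × Fin n // p.1 < p.2} =>
      ι K (b p.1.1) * ι K (b p.1.2)) := by
  rw [linearIndependent_iff'']
  intro s g hg hsum p
  classical
  -- apply the lifted functional
  set F : ExteriorAlgebra K V →ₗ[K] K :=
    liftAlternating (Function.update (fun _ => 0) 2 (dualAlt b p.1.1 p.1.2)) with hF
  have hwedge : ∀ q : {p : Fin n × Fin n // p.1 < p.2},
      F (ι K (b q.1.1) * ι K (b q.1.2)) = if q = p then 1 else 0 := by
    intro q
    have : ι K (b q.1.1) * ι K (b q.1.2) = ιMulti K 2 ![b q.1.1, b q.1.2] := by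
      simp [ιMulti_apply, List.ofFn_succ]
    rw [this, hF, liftAlternating_apply_ιMulti, Function.update_self]
    rw [dualAlt_apply_basis]
    by_cases hq : q = p
    · subst hq; simp [(ne_of_lt q.2)]
    · have : ¬ (q.1.1 = p.1.1 ∧ q.1.2 = p.1.2) := by
        intro ⟨h1, h2⟩; exact hq (Subtype.ext (Prod.ext h1 h2))
      rw [if_neg hq]
      by_cases h1 : q.1.1 = p.1.1
      · have h2 : ¬ q.1.2 = p.1.2 := fun h => this ⟨h1, h⟩
        have h3 : ¬ q.1.2 = p.1.1 := by
          intro h; exact absurd (h1 ▸ h : q.1.2 = q.1.1) (ne_of_gt q.2)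
        simp [h1, h2, h3]
      · by_cases h3 : q.1.2 = p.1.1
        · have h4 : ¬ q.1.1 = p.1.2 := by
            intro h
            have hq2 : q.1.1 < q.1.2 := q.2
            have hp2 : p.1.1 < p.1.2 := p.2
            rw [h3] at hq2
            rw [h] at hq2
            exact absurd (hq2.trans hp2) (lt_irrefl _)
          simp [h1, h3, h4]
        · simp [h1, h3]
  have := congrArg F hsum
  rw [map_sum, map_zero] at this
  simp only [map_smul, hwedge, smul_eq_mul, mul_ite, mul_one, mul_zero] at this
  rw [Finset.sum_ite_eq' s p] at this
  by_cases hp : p ∈ s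
  · rw [if_pos hp] at this; exact this
  · exact hg p hp



lemma two_mul_choose_two (k : ℕ) : 2 * k.choose 2 = k * (k - 1) := by
  induction k with
  | zero => rfl
  | succ j ih =>
    rw [Nat.choose_succ_succ, Nat.mul_add, ih, Nat.choose_one_right]
    cases j with
    | zero => rfl
    | succ i => rw [Nat.succ_sub_one, Nat.succ_sub_one]; ring

lemma comb_count {n : ℕ} (μ : Fin n → ℂ) (hunit : ∀ i, μ i * (starRingEnd ℂ) (μ i) = 1) :
    (((Finset.univ.filter
        (fun p : Fin n × Fin n => p.1 < p.2 ∧ μ p.1 * μ p.2 = 1)).card : ℚ)) =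
      ((Finset.univ.filter (fun i => μ i = 1)).card.choose 2 : ℚ) +
      ((Finset.univ.filter (fun i => μ i = -1)).card.choose 2 : ℚ) +
      (1 / 2) * ∑ lam ∈ (Finset.image μ Finset.univ) \ {1, -1},
        (((Finset.univ.filter (fun i => μ i = lam)).card : ℚ) *
         ((Finset.univ.filter (fun i => μ i = (starRingEnd ℂ) lam)).card : ℚ)) := by
  have hne : ∀ i, μ i ≠ 0 := fun i h => by simpa [h] using hunit i
  have hconj : ∀ i, (starRingEnd ℂ) (μ i) = (μ i)⁻¹ := fun i =>
    eq_inv_of_mul_eq_one_left (by rw [mul_comm]; exact hunit i)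
  set c : ℂ → ℕ := fun lam => (Finset.univ.filter (fun i => μ i = lam)).card with hc
  set T : Finset ℂ := Finset.image μ Finset.univ with hT
  set N : Finset (Fin n × Fin n) :=
    Finset.univ.filter (fun p => p.1 < p.2 ∧ μ p.1 * μ p.2 = 1) with hN
  set A : Finset (Fin n × Fin n) :=
    Finset.univ.filter (fun p => p.1 ≠ p.2 ∧ μ p.1 * μ p.2 = 1) with hA
  -- step 1 : card A = 2 * card N
  have step1 : A.card = 2 * N.card := by
    have hsplit := Finset.card_filter_add_card_filter_not
      (s := A) (p := fun p => p.1 < p.2)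
    have h1 : A.filter (fun p => p.1 < p.2) = N := by
      ext p
      simp only [hA, hN, Finset.mem_filter, Finset.mem_univ, true_and]
      constructor
      · rintro ⟨⟨-, h2⟩, h3⟩; exact ⟨h3, h2⟩
      · rintro ⟨h1, h2⟩; exact ⟨⟨ne_of_lt h1, h2⟩, h1⟩
    have h2 : (A.filter (fun p => ¬ p.1 < p.2)).card = N.card := by
      apply Finset.card_bij (fun p _ => (p.2, p.1))
      · rintro ⟨x, y⟩ hp
        simp only [hA, hN, Finset.mem_filter, Finset.mem_univ, true_and] at hp ⊢
        obtain ⟨⟨hne', hprod⟩, hnlt⟩ := hp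
        exact ⟨lt_of_le_of_ne (not_lt.mp hnlt) (Ne.symm hne'), by rwa [mul_comm]⟩
      · rintro ⟨x, y⟩ - ⟨x', y'⟩ - h
        simpa [Prod.ext_iff, and_comm] using h
      · rintro ⟨x, y⟩ hp
        simp only [hA, hN, Finset.mem_filter, Finset.mem_univ, true_and] at hp ⊢
        exact ⟨(y, x), ⟨⟨ne_of_gt hp.1, by rw [mul_comm]; exact hp.2⟩,
          not_lt.mpr (le_of_lt hp.1)⟩, rfl⟩
    rw [h1, h2] at hsplit
    omega
  -- step 2 : fiberwise count
  have step2 : A.card = ∑ lam ∈ T, (A.filter (fun p => μ p.1 = lam)).card := by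
    apply Finset.card_eq_sum_card_fiberwise
    intro p hp
    exact Finset.mem_image.mpr ⟨p.1, Finset.mem_univ _, rfl⟩
  -- fibers
  have fiber_ne : ∀ lam : ℂ, lam ≠ 0 → lam * lam ≠ 1 →
      (A.filter (fun p => μ p.1 = lam)).card = c lam * c lam⁻¹ := by
    intro lam h0 hsq
    have : A.filter (fun p => μ p.1 = lam) =
        (Finset.univ.filter (fun i => μ i = lam)) ×ˢ
          (Finset.univ.filter (fun i => μ i = lam⁻¹)) := by
      ext ⟨x, y⟩
      simp only [hA, Finset.mem_filter, Finset.mem_univ, true_and, Finset.mem_product]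
      constructor
      · rintro ⟨⟨hne', hprod⟩, h1⟩
        refine ⟨h1, ?_⟩
        rw [h1] at hprod
        exact (inv_eq_of_mul_eq_one_right hprod).symm
      · rintro ⟨h1, h2⟩
        refine ⟨⟨?_, ?_⟩, h1⟩
        · intro h
          apply hsq
          have he : lam⁻¹ = lam := by rw [← h2, ← h, h1]
          nth_rewrite 2 [← he]
          exact mul_inv_cancel₀ h0
        · rw [h1, h2, mul_inv_cancel₀ h0]
    rw [this, Finset.card_product]
  have fiber_pm : ∀ lam : ℂ, lam * lam = 1 →
      (A.filter (fun p => μ p.1 = lam)).card = c lam * (c lam - 1) := by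
    intro lam hsq
    have : A.filter (fun p => μ p.1 = lam) =
        (Finset.univ.filter (fun i => μ i = lam)).offDiag := by
      ext ⟨x, y⟩
      simp only [hA, Finset.mem_filter, Finset.mem_univ, true_and, Finset.mem_offDiag]
      constructor
      · rintro ⟨⟨hne', hprod⟩, h1⟩
        refine ⟨h1, ?_, hne'⟩
        rw [h1] at hprod
        have h0 : lam ≠ 0 := fun h => by simp [h] at hsq
        exact mul_left_cancel₀ h0 (hprod.trans hsq.symm)
      · rintro ⟨h1, h2, h3⟩
        exact ⟨⟨h3, by rw [h1, h2, hsq]⟩, h1⟩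
    rw [this, Finset.offDiag_card]
    cases hcv : c lam with
    | zero => simp only [hc] at hcv; rw [hcv]
    | succ k =>
      simp only [hc] at hcv
      rw [hcv, Nat.succ_sub_one, Nat.succ_mul, Nat.add_sub_cancel]
      exact Nat.mul_comm _ _
  -- assemble in ℕ
  have hsumN : A.card = (∑ lam ∈ T \ {1, -1}, c lam * c lam⁻¹) +
      (c 1 * (c 1 - 1) + c (-1) * (c (-1) - 1)) := by
    rw [step2, ← Finset.sum_sdiff (Finset.inter_subset_left (s₂ := ({1, -1} : Finset ℂ)))]
    congr 1
    · rw [Finset.sdiff_inter_self_left]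
      apply Finset.sum_congr rfl
      intro lam hlam
      simp only [Finset.mem_sdiff, Finset.mem_insert, Finset.mem_singleton] at hlam
      obtain ⟨hT', hnot⟩ := hlam
      obtain ⟨i, -, rfl⟩ := Finset.mem_image.mp hT'
      refine fiber_ne _ (hne i) ?_
      intro h
      exact hnot (mul_self_eq_one_iff.mp h)
    · have hcongr : ∀ lam ∈ T ∩ ({1, -1} : Finset ℂ),
          (A.filter (fun p => μ p.1 = lam)).card = c lam * (c lam - 1) := by
        intro lam hlam
        simp only [Finset.mem_inter, Finset.mem_insert, Finset.mem_singleton] at hlam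
        refine fiber_pm _ ?_
        rcases hlam.2 with h | h <;> rw [h] <;> ring
      rw [Finset.sum_congr rfl hcongr]
      have hzero : ∀ x ∈ ({1, -1} : Finset ℂ), x ∉ T ∩ ({1, -1} : Finset ℂ) →
          c x * (c x - 1) = 0 := by
        intro x hx hnx
        have hxT : x ∉ T := fun hT' => hnx (Finset.mem_inter.mpr ⟨hT', hx⟩)
        have hcx : c x = 0 := by
          rw [hc]
          rw [Finset.card_eq_zero, Finset.filter_eq_empty_iff]
          intro i _
          exact fun h => hxT (Finset.mem_image.mpr ⟨i, Finset.mem_univ _, h⟩)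
        rw [hcx, Nat.zero_mul]
      rw [Finset.sum_subset (Finset.inter_subset_right (s₁ := T)) hzero]
      rw [show ({1, -1} : Finset ℂ) = insert 1 {-1} from rfl,
        Finset.sum_insert (by norm_num), Finset.sum_singleton]
  rw [← two_mul_choose_two (c 1), ← two_mul_choose_two (c (-1))] at hsumN
  have hQ := congrArg (fun k : ℕ => (k : ℚ)) hsumN
  push_cast at hQ
  have h2N : (A.card : ℚ) = 2 * N.card := by exact_mod_cast step1
  have hconjsum : ∑ lam ∈ T \ {1, -1}, (c lam : ℚ) * (c ((starRingEnd ℂ) lam) : ℚ) =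
      ∑ lam ∈ T \ {1, -1}, (c lam : ℚ) * (c lam⁻¹ : ℚ) := by
    apply Finset.sum_congr rfl
    intro lam hlam
    obtain ⟨hT', -⟩ := Finset.mem_sdiff.mp hlam
    obtain ⟨i, -, rfl⟩ := Finset.mem_image.mp hT'
    rw [hconj i]
  rw [hconjsum]
  linarith [hQ, h2N]

end Aux

namespace Paper

theorem stmt_16 (V : Type) [AddCommGroup V] [Module ℂ V] [FiniteDimensional ℂ V]
    (f : V →ₗ[ℂ] V) (hf : ∃ m : ℕ, 0 < m ∧ f ^ m = 1) :
    -- t λ is the dimension of the λ-eigenspace of f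
    let t : ℂ → ℕ := fun lam => Module.finrank ℂ (Module.End.eigenspace f lam)
    -- S is the set of eigenvalues of f
    let S : Finset ℂ := (LinearMap.charpoly f).roots.toFinset
    -- the 1-eigenspace of the induced automorphism Λ²f of Λ²V
    (Module.finrank ℂ
        ((Module.End.eigenspace (ExteriorAlgebra.map f).toLinearMap 1) ⊓
          (⋀[ℂ]^2 V) : Submodule ℂ (ExteriorAlgebra ℂ V)) : ℚ) =
      (t 1).choose 2 + (t (-1)).choose 2 +
        (1 / 2) * ∑ lam ∈ S \ {1, -1}, (t lam : ℚ) * (t (starRingEnd ℂ lam) : ℚ) := by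
  intro t S
  obtain ⟨m, hm, hfm⟩ := hf
  -- Step A: semisimplicity and diagonalizability
  have haev : (Polynomial.aeval f) ((Polynomial.X : Polynomial ℂ) ^ m - 1) = 0 := by
    rw [map_sub, map_one, Polynomial.aeval_X_pow, hfm, sub_self]
  have hsf : Squarefree ((Polynomial.X : Polynomial ℂ) ^ m - 1) := by
    refine (Polynomial.X_pow_sub_one_separable_iff.mpr ?_).squarefree
    exact_mod_cast (Nat.cast_ne_zero (R := ℂ)).mpr hm.ne'
  have hss : Module.End.IsSemisimple (R := ℂ) (M := V) f :=
    Module.End.isSemisimple_of_squarefree_aeval_eq_zero hsf haev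
  have hsup : ⨆ μ : ℂ, Module.End.eigenspace (R := ℂ) (M := V) f μ = ⊤ := by
    have h1 := Module.End.iSup_maxGenEigenspace_eq_top (K := ℂ) (V := V) f
    simp_rw [hss.isFinitelySemisimple.maxGenEigenspace_eq_eigenspace] at h1
    exact h1
  -- Step B: eigenbasis
  obtain ⟨n, b, μ, hbμ⟩ := exists_eigenbasis (K := ℂ) f hsup
  -- Step C: roots of unity
  have hμm : ∀ i, μ i ^ m = 1 := by
    intro i
    have hpow : ∀ k : ℕ, (f ^ k) (b i) = μ i ^ k • b i := by
      intro k
      induction k with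
      | zero => simp
      | succ j ih =>
        rw [pow_succ', Module.End.mul_apply, ih, map_smul, hbμ i, smul_smul, ← pow_succ]
    have h1 : (f ^ m) (b i) = b i := by rw [hfm]; rfl
    rw [hpow m] at h1
    exact smul_left_injective ℂ (b.ne_zero i)
      (show μ i ^ m • b i = (1 : ℂ) • b i by rw [one_smul]; exact h1)
  have hunit : ∀ i, μ i * (starRingEnd ℂ) (μ i) = 1 := by
    intro i
    have habs : ‖μ i‖ ^ m = 1 := by
      rw [← norm_pow, hμm i, norm_one]
    have habs1 : ‖μ i‖ = 1 := by
      rcases lt_trichotomy (‖μ i‖) 1 with h | h | h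
      · exact absurd habs (by
          have := pow_lt_one₀ (norm_nonneg _) h hm.ne'
          linarith)
      · exact h
      · exact absurd habs (by
          have := one_lt_pow₀ h hm.ne'
          linarith)
    rw [Complex.mul_conj, Complex.normSq_eq_norm_sq, habs1]
    norm_num
  -- Step D: the exterior square
  set W : Submodule ℂ (ExteriorAlgebra ℂ V) := ⋀[ℂ]^2 V with hW
  have hWinv : ∀ x ∈ W, (ExteriorAlgebra.map f).toLinearMap x ∈ W :=
    fun x hx => map_mem_exteriorPower_two f hx
  set g : Module.End ℂ W := ((ExteriorAlgebra.map f).toLinearMap).restrict hWinv with hg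
  set P := {p : Fin n × Fin n // p.1 < p.2} with hP
  set w' : P → W := fun p => ⟨ι ℂ (b p.1.1) * ι ℂ (b p.1.2), wedge_mem b p.1.1 p.1.2⟩ with hw'
  have hwsub : (W.subtype ∘ w') = fun p : P => ι ℂ (b p.1.1) * ι ℂ (b p.1.2) := rfl
  have hindep : LinearIndependent ℂ w' := by
    have := wedge_linearIndependent b
    rw [← hwsub] at this
    exact this.of_comp W.subtype
  have hspanW : ⊤ ≤ span ℂ (Set.range w') := by
    have hmap : (span ℂ (Set.range w')).map W.subtype = W := by
      rw [Submodule.map_span, ← Set.range_comp, hwsub]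
      exact wedge_span b
    intro x _
    have hx : (x : ExteriorAlgebra ℂ V) ∈ (span ℂ (Set.range w')).map W.subtype := by
      rw [hmap]; exact x.2
    obtain ⟨y, hy, hyx⟩ := hx
    rwa [show y = x from Subtype.ext hyx] at hy
  set BW : Basis P ℂ W := Basis.mk hindep hspanW with hBW
  have hBWapp : ∀ p : P, BW p = w' p := fun p => by
    rw [hBW]; exact Basis.mk_apply hindep hspanW p
  have hgB : ∀ p : P, g (BW p) = (μ p.1.1 * μ p.1.2) • BW p := by
    intro p
    rw [hBWapp p]
    apply Subtype.ext
    rw [Submodule.coe_smul]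
    rw [hg, LinearMap.restrict_apply]
    show (ExteriorAlgebra.map f) (ι ℂ (b p.1.1) * ι ℂ (b p.1.2)) = _
    rw [map_mul, map_apply_ι, map_apply_ι, hbμ, hbμ, map_smul, map_smul,
      smul_mul_assoc, mul_smul_comm, smul_smul]
  have hdim1 : finrank ℂ (Module.End.eigenspace g 1) =
      (Finset.univ.filter (fun p : P => μ p.1.1 * μ p.1.2 = 1)).card :=
    finrank_eigenspace_eq_card BW g (fun p => μ p.1.1 * μ p.1.2) hgB 1
  have htrans : (Module.End.eigenspace (ExteriorAlgebra.map f).toLinearMap 1) ⊓ W =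
      (Module.End.eigenspace g 1).map W.subtype := by
    ext x
    simp only [Submodule.mem_inf, Module.End.mem_eigenspace_iff, one_smul, Submodule.mem_map]
    constructor
    · rintro ⟨h1, h2⟩
      refine ⟨⟨x, h2⟩, ?_, rfl⟩
      apply Subtype.ext
      rw [hg, LinearMap.restrict_apply]
      exact h1
    · rintro ⟨y, hy, rfl⟩
      refine ⟨?_, y.2⟩
      have := congrArg (W.subtype) hy
      rw [hg] at this
      exact this
  have hdim2 : finrank ℂ
      ((Module.End.eigenspace (ExteriorAlgebra.map f).toLinearMap 1) ⊓ W : Submodule ℂ _) =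
      (Finset.univ.filter (fun p : P => μ p.1.1 * μ p.1.2 = 1)).card := by
    rw [htrans, Submodule.finrank_map_subtype_eq, hdim1]
  have hcard : (Finset.univ.filter (fun p : P => μ p.1.1 * μ p.1.2 = 1)).card =
      (Finset.univ.filter
        (fun p : Fin n × Fin n => p.1 < p.2 ∧ μ p.1 * μ p.2 = 1)).card := by
    apply Finset.card_bij (fun p _ => p.1)
    · rintro ⟨p, hp⟩ hmem
      simp only [Finset.mem_filter, Finset.mem_univ, true_and] at hmem ⊢
      exact ⟨hp, hmem⟩
    · rintro ⟨p, hp⟩ - ⟨q, hq⟩ - h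
      exact Subtype.ext h
    · rintro p hp
      simp only [Finset.mem_filter, Finset.mem_univ, true_and] at hp
      exact ⟨⟨p, hp.1⟩, by simp [hp.2], rfl⟩
  -- Step E: counts
  have ht : ∀ lam : ℂ, t lam = (Finset.univ.filter (fun i => μ i = lam)).card :=
    fun lam => finrank_eigenspace_eq_card b f μ hbμ lam
  have hS : S = Finset.image μ Finset.univ := by
    show (LinearMap.charpoly f).roots.toFinset = _
    rw [charpoly_diag b f μ hbμ, Multiset.toFinset_map, Finset.val_toFinset]
  rw [hdim2, hcard, hS]
  simp only [ht]
  exact comb_count μ hunit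

end Paper
end
end
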